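/- arXiv:1301.6647 — 2 statements merged into one kernel-verified Lean document; each statement's English description precedes it below -/
import Mathlib

section
/- Two extended Poisson-binomial distributions with parameters (λ, p_1, p_2, ...) and (λ', p'_1, p'_2, ...), where λ, λ' ≥ 0 and (p_k), (p'_k) are nonincreasing sequences in [0,1] with finite sums, are equal if and only if λ = λ' and p_k = p'_k for all k. -/
open MeasureTheory ProbabilityTheory Filter Topology
open scoped ENNReal NNReal
set_option linter.unusedSectionVars false
set_option linter.unusedVariables false
set_option maxHeartbeats 1000000

section Aux

lemma nat_ev_zero {f : ℕ → ℕ} (h : Summable f) : ∃ N, ∀ k, N ≤ k → f k = 0 := by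
  obtain ⟨a, ha⟩ := h
  have h1 : ∀ᶠ s in (atTop : Filter (Finset ℕ)), ∑ i ∈ s, f i = a :=
    ha.eventually (Filter.eventually_iff_exists_mem.mpr ⟨{a}, (isOpen_discrete {a}).mem_nhds rfl, fun x hx => hx⟩)
  obtain ⟨s₀, hs₀⟩ := eventually_atTop.mp h1
  refine ⟨(s₀.sup id) + 1, fun k hk => ?_⟩
  have hks : k ∉ s₀ := fun hmem => by
    have h3 : id k ≤ s₀.sup id := Finset.le_sup hmem
    simp only [id] at h3
    omega
  have h2 := hs₀ (insert k s₀) (Finset.subset_insert _ _)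
  rw [Finset.sum_insert hks, hs₀ s₀ le_rfl] at h2
  omega

lemma nat_tsum_eq {f : ℕ → ℕ} {N : ℕ} (h : ∀ k, N ≤ k → f k = 0) :
    ∑' k, f k = ∑ k ∈ Finset.range N, f k :=
  tsum_eq_sum (fun k hk => h k (by simpa using hk))

lemma nat_tsum_not_summable {f : ℕ → ℕ} (h : ¬ ∃ N, ∀ k, N ≤ k → f k = 0) :
    ∑' k, f k = 0 :=
  tsum_eq_zero_of_not_summable (fun hs => h (nat_ev_zero hs))

lemma S_meas {Ω : Type*} [MeasurableSpace Ω] (Z : ℕ → Ω → ℕ) (hZ : ∀ k, Measurable (Z k)) :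
    Measurable (fun ω => ∑' k, Z k ω) := by
  apply measurable_to_countable'
  intro n
  have hset : (fun ω => ∑' k, Z k ω) ⁻¹' {n}
      = (⋃ N, ({ω | ∀ k, N ≤ k → Z k ω = 0} ∩ {ω | ∑ k ∈ Finset.range N, Z k ω = n}))
        ∪ ({ω | ∀ N, ∃ k, N ≤ k ∧ Z k ω ≠ 0} ∩ {ω | n = 0}) := by
    ext ω
    simp only [Set.mem_preimage, Set.mem_singleton_iff, Set.mem_union, Set.mem_iUnion,
      Set.mem_inter_iff, Set.mem_setOf_eq]
    constructor
    · intro hs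
      by_cases hE : ∃ N, ∀ k, N ≤ k → Z k ω = 0
      · obtain ⟨N, hN⟩ := hE
        exact Or.inl ⟨N, hN, by rw [← nat_tsum_eq hN, hs]⟩
      · push_neg at hE
        refine Or.inr ⟨fun N => ?_, by rw [← hs, nat_tsum_not_summable (by push_neg; exact hE)]⟩
        obtain ⟨k, hk1, hk2⟩ := hE N
        exact ⟨k, hk1, hk2⟩
    · rintro (⟨N, hN, hsum⟩ | ⟨hinf, hn⟩)
      · rw [nat_tsum_eq hN, hsum]
      · rw [hn, nat_tsum_not_summable (by push_neg; exact hinf)]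
  rw [hset]
  apply MeasurableSet.union
  · apply MeasurableSet.iUnion; intro N
    apply MeasurableSet.inter
    · have h1 : {ω | ∀ k, N ≤ k → Z k ω = 0} = ⋂ k, ⋂ _h : N ≤ k, Z k ⁻¹' {0} := by
        ext ω; simp
      rw [h1]
      exact MeasurableSet.iInter fun k => MeasurableSet.iInter fun _ =>
        (hZ k) (measurableSet_singleton 0)
    · exact (Finset.measurable_sum _ fun k _ => hZ k) (measurableSet_singleton n)
  · apply MeasurableSet.inter
    · have h1 : {ω | ∀ N, ∃ k, N ≤ k ∧ Z k ω ≠ 0} = ⋂ N, ⋃ k, ⋃ _h : N ≤ k, (Z k ⁻¹' {0})ᶜ := by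
        ext ω; simp
      rw [h1]
      exact MeasurableSet.iInter fun N => MeasurableSet.iUnion fun k =>
        MeasurableSet.iUnion fun _ => ((hZ k) (measurableSet_singleton 0)).compl
    · by_cases h : n = 0 <;> simp [h]

-- log bound lemmas
lemma neglog_nonneg {a : ℝ} (ha0 : 0 ≤ a) (ha1 : a < 1) : 0 ≤ -Real.log (1 - a) := by
  have := Real.log_nonpos (by linarith) (by linarith : (1:ℝ) - a ≤ 1)
  linarith

lemma neglog_le {a c : ℝ} (ha0 : 0 ≤ a) (hc : 0 < c) (hac : a + c ≤ 1) :
    -Real.log (1 - a) ≤ a / c := by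
  have h1 : (0:ℝ) < 1 - a := by linarith
  have h2 : -Real.log (1 - a) = Real.log (1 - a)⁻¹ := by rw [Real.log_inv]
  have h3 : Real.log (1 - a)⁻¹ ≤ (1 - a)⁻¹ - 1 :=
    Real.log_le_sub_one_of_pos (by positivity)
  have h4 : (1 - a)⁻¹ - 1 = a / (1 - a) := by field_simp; ring
  have h5 : a / (1 - a) ≤ a / c := by
    apply div_le_div_of_nonneg_left ha0 hc (by linarith)
  linarith


lemma coeff_summable {c : ℕ → ℝ} {C s : ℝ} (hc : ∀ m, 0 ≤ c m ∧ c m ≤ C)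
    (hs0 : 0 ≤ s) (hs1 : s < 1) : Summable (fun m => c m * s ^ m) := by
  apply Summable.of_nonneg_of_le (fun m => mul_nonneg (hc m).1 (by positivity))
    (fun m => mul_le_mul_of_nonneg_right (hc m).2 (by positivity))
  exact (summable_geometric_of_lt_one hs0 hs1).mul_left C

lemma coeff_head {c : ℕ → ℝ} {C s : ℝ} (hC : 0 ≤ C) (hc : ∀ m, 0 ≤ c m ∧ c m ≤ C)
    (hs0 : 0 < s) (hs1 : s ≤ 1/2) : |(∑' m, c m * s ^ m) - c 0| ≤ 2 * C * s := by
  have hs1' : s < 1 := by linarith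
  have hsum := coeff_summable hc hs0.le hs1'
  rw [Summable.tsum_eq_zero_add hsum]
  simp only [pow_zero, mul_one, add_sub_cancel_left]
  have hb : ∀ m : ℕ, c (m + 1) * s ^ (m + 1) ≤ (C * s) * s ^ m := by
    intro m
    rw [pow_succ]
    calc c (m+1) * (s ^ m * s) ≤ C * (s ^ m * s) :=
      mul_le_mul_of_nonneg_right (hc (m+1)).2 (by positivity)
    _ = (C * s) * s ^ m := by ring
  have hsum2 : Summable (fun m : ℕ => c (m + 1) * s ^ (m + 1)) :=
    (summable_nat_add_iff 1).mpr hsum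
  have hgeo : Summable (fun m : ℕ => (C * s) * s ^ m) :=
    (summable_geometric_of_lt_one hs0.le hs1').mul_left _
  have h1 : ∑' m, c (m + 1) * s ^ (m + 1) ≤ (C * s) * (1 - s)⁻¹ := by
    calc ∑' m, c (m + 1) * s ^ (m + 1) ≤ ∑' m : ℕ, (C * s) * s ^ m :=
      Summable.tsum_le_tsum hb hsum2 hgeo
    _ = (C * s) * (1 - s)⁻¹ := by rw [tsum_mul_left, tsum_geometric_of_lt_one hs0.le hs1']
  have h2 : (0:ℝ) ≤ ∑' m, c (m + 1) * s ^ (m + 1) :=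
    tsum_nonneg (fun m => mul_nonneg (hc _).1 (by positivity))
  rw [abs_of_nonneg h2]
  have h3 : (1 - s)⁻¹ ≤ 2 := by
    rw [inv_le_comm₀ (by linarith) (by norm_num)]
    linarith
  calc ∑' m, c (m + 1) * s ^ (m + 1) ≤ (C * s) * (1 - s)⁻¹ := h1
  _ ≤ (C * s) * 2 := by
    apply mul_le_mul_of_nonneg_left h3 (by positivity)
  _ = 2 * C * s := by ring

lemma coeff_shift {c : ℕ → ℝ} {C s : ℝ} (hc : ∀ m, 0 ≤ c m ∧ c m ≤ C)
    (hs0 : 0 < s) (hs1 : s < 1) :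
    ∑' m, c m * s ^ m = c 0 + s * ∑' m, c (m + 1) * s ^ m := by
  have hsum := coeff_summable hc hs0.le hs1
  rw [Summable.tsum_eq_zero_add hsum]
  simp only [pow_zero, mul_one]
  congr 1
  rw [← tsum_mul_left]
  congr 1; ext m; ring

lemma coeff_head0 {c c' : ℕ → ℝ} {C : ℝ} (hC : 0 ≤ C)
    (hc : ∀ m, 0 ≤ c m ∧ c m ≤ C) (hc' : ∀ m, 0 ≤ c' m ∧ c' m ≤ C)
    (h : ∀ s : ℝ, 0 < s → s ≤ 1/2 → ∑' m, c m * s ^ m = ∑' m, c' m * s ^ m) :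
    c 0 = c' 0 := by
  by_contra hne
  have hδ0 : 0 < |c 0 - c' 0| := abs_pos.mpr (sub_ne_zero.mpr hne)
  set δ := |c 0 - c' 0| with hδdef
  set s : ℝ := min (1/2) (δ / (8 * (C + 1))) with hsdef
  have hspos : 0 < s := lt_min (by norm_num) (by positivity)
  have hs12 : s ≤ 1/2 := min_le_left _ _
  have h1 := coeff_head hC hc hspos hs12
  have h2 := coeff_head hC hc' hspos hs12
  have h3 := h s hspos hs12
  have h4 : δ ≤ 4 * C * s := by
    calc δ ≤ |c 0 - (∑' m, c' m * s ^ m)| + |(∑' m, c' m * s ^ m) - c' 0| :=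
      abs_sub_le _ _ _
    _ = |(∑' m, c m * s ^ m) - c 0| + |(∑' m, c' m * s ^ m) - c' 0| := by
      rw [← h3, abs_sub_comm]
    _ ≤ 2 * C * s + 2 * C * s := add_le_add h1 h2
    _ = 4 * C * s := by ring
  have h5 : s ≤ δ / (8 * (C + 1)) := min_le_right _ _
  have h6 : 4 * C * s < δ := by
    have ha : 4 * C * s ≤ 4 * C * (δ / (8 * (C + 1))) :=
      mul_le_mul_of_nonneg_left h5 (by positivity)
    have hb : 4 * C * (δ / (8 * (C + 1))) = δ * ((4 * C) / (8 * (C + 1))) := by ring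
    have hcc : (4 * C) / (8 * (C + 1)) < 1 := by
      rw [div_lt_one (by positivity)]
      linarith
    have hd : δ * ((4 * C) / (8 * (C + 1))) < δ * 1 :=
      mul_lt_mul_of_pos_left hcc hδ0
    rw [mul_one] at hd
    linarith
  linarith

lemma coeff_unique {c c' : ℕ → ℝ} {C : ℝ} (hC : 0 ≤ C)
    (hc : ∀ m, 0 ≤ c m ∧ c m ≤ C) (hc' : ∀ m, 0 ≤ c' m ∧ c' m ≤ C)
    (h : ∀ s : ℝ, 0 < s → s ≤ 1/2 → ∑' m, c m * s ^ m = ∑' m, c' m * s ^ m) :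
    c = c' := by
  have lev : ∀ j : ℕ, ∀ s : ℝ, 0 < s → s ≤ 1/2 →
      ∑' m, c (j + m) * s ^ m = ∑' m, c' (j + m) * s ^ m := by
    intro j
    induction j with
    | zero => intro s a b; simpa using h s a b
    | succ j ih =>
      intro s hs0 hs1
      have hs1' : s < 1 := by linarith
      have hdj : ∀ m, 0 ≤ c (j + m) ∧ c (j + m) ≤ C := fun m => hc _
      have hdj' : ∀ m, 0 ≤ c' (j + m) ∧ c' (j + m) ≤ C := fun m => hc' _
      have e1 := coeff_shift hdj hs0 hs1'
      have e2 := coeff_shift hdj' hs0 hs1'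
      have hidx : ∀ m : ℕ, j + (m + 1) = j + 1 + m := fun m => by omega
      have hfun : (fun m : ℕ => c (j + (m + 1)) * s ^ m) = fun m => c (j + 1 + m) * s ^ m := by
        funext m; rw [hidx m]
      have hfun' : (fun m : ℕ => c' (j + (m + 1)) * s ^ m) = fun m => c' (j + 1 + m) * s ^ m := by
        funext m; rw [hidx m]
      rw [hfun] at e1
      rw [hfun'] at e2
      have h0 : c (j + 0) = c' (j + 0) := coeff_head0 hC hdj hdj' ih
      have heq := ih s hs0 hs1
      rw [e1, e2, h0] at heq
      have := add_left_cancel heq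
      exact mul_left_cancel₀ (ne_of_gt hs0) this
  funext n
  have hdn : ∀ m, 0 ≤ c (n + m) ∧ c (n + m) ≤ C := fun m => hc _
  have hdn' : ∀ m, 0 ≤ c' (n + m) ∧ c' (n + m) ≤ C := fun m => hc' _
  have hfin := coeff_head0 hC hdn hdn' (lev n)
  simpa using hfin

lemma pow_summable {a : ℕ → ℝ} (ha : ∀ k, 0 ≤ a k ∧ a k ≤ 1) (hs : Summable a)
    {m : ℕ} (hm : 1 ≤ m) : Summable (fun k => a k ^ m) :=
  Summable.of_nonneg_of_le (fun k => pow_nonneg (ha k).1 m)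
    (fun k => by
      calc a k ^ m ≤ a k ^ 1 := pow_le_pow_of_le_one (ha k).1 (ha k).2 hm
      _ = a k := pow_one _) hs

lemma tail_le {a b : ℕ → ℝ} (ha : ∀ k, 0 ≤ a k ∧ a k ≤ 1) (hb : ∀ k, 0 ≤ b k ∧ b k ≤ 1)
    (hbmono : ∀ k, b k ≤ b 0) (hasum : Summable a) (hbsum : Summable b)
    (h : ∀ m : ℕ, 2 ≤ m → ∑' k, a k ^ m = ∑' k, b k ^ m) : a 0 ≤ b 0 := by
  by_contra hlt
  push_neg at hlt
  have ha0 : 0 < a 0 := lt_of_le_of_lt (hb 0).1 hlt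
  set T := ∑' k, b k with hT
  have hTnn : b 0 ≤ T := Summable.le_tsum hbsum 0 (fun i _ => (hb i).1)
  have key : ∀ n : ℕ, a 0 ^ (n + 2) ≤ b 0 ^ (n + 1) * T := by
    intro n
    have h1 : a 0 ^ (n + 2) ≤ ∑' k, a k ^ (n + 2) :=
      Summable.le_tsum (pow_summable ha hasum (by omega)) 0 (fun i _ => pow_nonneg (ha i).1 _)
    have h2 : ∀ k, b k ^ (n + 2) ≤ b 0 ^ (n + 1) * b k := by
      intro k
      calc b k ^ (n + 2) = b k ^ (n + 1) * b k := by ring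
      _ ≤ b 0 ^ (n + 1) * b k :=
        mul_le_mul_of_nonneg_right (pow_le_pow_left₀ (hb k).1 (hbmono k) _) (hb k).1
    have h3 : ∑' k, b k ^ (n + 2) ≤ b 0 ^ (n + 1) * T := by
      calc ∑' k, b k ^ (n + 2) ≤ ∑' k, b 0 ^ (n + 1) * b k :=
        Summable.tsum_le_tsum h2 (pow_summable hb hbsum (by omega)) (hbsum.mul_left _)
      _ = b 0 ^ (n + 1) * T := tsum_mul_left
    calc a 0 ^ (n + 2) ≤ ∑' k, a k ^ (n + 2) := h1
    _ = ∑' k, b k ^ (n + 2) := h (n + 2) (by omega)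
    _ ≤ b 0 ^ (n + 1) * T := h3
  by_cases hb0 : b 0 = 0
  · have := key 0
    rw [hb0] at this
    simp only [pow_succ, pow_zero, one_mul, zero_mul] at this
    nlinarith
  · have hb0' : 0 < b 0 := lt_of_le_of_ne (hb 0).1 (Ne.symm hb0)
    have hT0 : 0 < T := lt_of_lt_of_le hb0' hTnn
    have hq1 : b 0 / a 0 < 1 := (div_lt_one ha0).mpr hlt
    have hq0 : 0 ≤ b 0 / a 0 := by positivity
    obtain ⟨n, hn⟩ := exists_pow_lt_of_lt_one
      (show (0:ℝ) < a 0 ^ 2 / (b 0 * T) by positivity) hq1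
    have hn' : (b 0) ^ n * (b 0 * T) < a 0 ^ 2 * a 0 ^ n := by
      rw [div_pow, div_lt_div_iff₀ (by positivity) (by positivity)] at hn
      nlinarith [hn]
    have hk := key n
    have e1 : a 0 ^ (n + 2) = a 0 ^ 2 * a 0 ^ n := by ring
    have e2 : b 0 ^ (n + 1) * T = b 0 ^ n * (b 0 * T) := by ring
    nlinarith [hk]

lemma moments_unique {p p' : ℕ → ℝ}
    (hp : ∀ k, p k ∈ Set.Icc (0:ℝ) 1) (hp' : ∀ k, p' k ∈ Set.Icc (0:ℝ) 1)
    (hpmono : Antitone p) (hpmono' : Antitone p')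
    (hpsum : Summable p) (hpsum' : Summable p')
    (h : ∀ m : ℕ, 2 ≤ m → ∑' k, p k ^ m = ∑' k, p' k ^ m) : p = p' := by
  have main : ∀ j, p j = p' j := by
    intro j
    induction j using Nat.strong_induction_on with
    | _ j IH =>
      have htail : ∀ m : ℕ, 2 ≤ m → ∑' k, p (k + j) ^ m = ∑' k, p' (k + j) ^ m := by
        intro m hm
        have hsm : Summable (fun k => p k ^ m) :=
          pow_summable (fun k => ⟨(hp k).1, (hp k).2⟩) hpsum (by omega)
        have hsm' : Summable (fun k => p' k ^ m) :=
          pow_summable (fun k => ⟨(hp' k).1, (hp' k).2⟩) hpsum' (by omega)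
        have e1 := Summable.sum_add_tsum_nat_add j hsm
        have e2 := Summable.sum_add_tsum_nat_add j hsm'
        have hpre : ∑ i ∈ Finset.range j, p i ^ m = ∑ i ∈ Finset.range j, p' i ^ m :=
          Finset.sum_congr rfl (fun i hi => by rw [IH i (Finset.mem_range.mp hi)])
        have := h m hm
        -- e1 : ∑ i in range j, p i ^ m + ∑' k, p (k + j) ^ m = ∑' k, p k ^ m
        linarith [e1, e2]
      have h1 : p j ≤ p' j := by
        have := tail_le (a := fun k => p (k + j)) (b := fun k => p' (k + j))
          (fun k => ⟨(hp _).1, (hp _).2⟩) (fun k => ⟨(hp' _).1, (hp' _).2⟩)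
          (fun k => hpmono' (by omega)) ((summable_nat_add_iff j).mpr hpsum)
          ((summable_nat_add_iff j).mpr hpsum') htail
        simpa using this
      have h2 : p' j ≤ p j := by
        have := tail_le (a := fun k => p' (k + j)) (b := fun k => p (k + j))
          (fun k => ⟨(hp' _).1, (hp' _).2⟩) (fun k => ⟨(hp _).1, (hp _).2⟩)
          (fun k => hpmono (by omega)) ((summable_nat_add_iff j).mpr hpsum')
          ((summable_nat_add_iff j).mpr hpsum) (fun m hm => (htail m hm).symm)
        simpa using this
      linarith
  funext j
  exact main j

noncomputable def pbCoeff (lam : ℝ) (p : ℕ → ℝ) : ℕ → ℝ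
  | 0 => 0
  | (m + 1) => (if m = 0 then lam else 0) + (∑' k, p k ^ (m + 1)) / (m + 1)

lemma pbCoeff_bounds {lam : ℝ} {p : ℕ → ℝ} (hlam : 0 ≤ lam)
    (hp : ∀ k, p k ∈ Set.Icc (0:ℝ) 1) (hpsum : Summable p) (m : ℕ) :
    0 ≤ pbCoeff lam p m ∧ pbCoeff lam p m ≤ lam + ∑' k, p k := by
  have hT0 : 0 ≤ ∑' k, p k := tsum_nonneg (fun k => (hp k).1)
  match m with
  | 0 => exact ⟨le_refl _, by simpa [pbCoeff] using add_nonneg hlam hT0⟩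
  | (j + 1) =>
    have hM0 : 0 ≤ ∑' k, p k ^ (j + 1) := tsum_nonneg (fun k => pow_nonneg (hp k).1 _)
    have hMle : ∑' k, p k ^ (j + 1) ≤ ∑' k, p k := by
      apply Summable.tsum_le_tsum _ (pow_summable (fun k => ⟨(hp k).1, (hp k).2⟩) hpsum (by omega)) hpsum
      intro k
      calc p k ^ (j + 1) ≤ p k ^ 1 := pow_le_pow_of_le_one (hp k).1 (hp k).2 (by omega)
      _ = p k := pow_one _
    have hdiv0 : 0 ≤ (∑' k, p k ^ (j + 1)) / (j + 1) := by positivity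
    have hdivle : (∑' k, p k ^ (j + 1)) / (j + 1) ≤ ∑' k, p k := by
      have h1 : (∑' k, p k ^ (j + 1)) / ((j:ℝ) + 1) ≤ ∑' k, p k ^ (j + 1) :=
        div_le_self hM0 (by exact_mod_cast Nat.succ_le_succ (Nat.zero_le j))
      linarith
    constructor
    · simp only [pbCoeff]
      split <;> [linarith; linarith]
    · simp only [pbCoeff]
      split <;> [linarith; linarith]

lemma expansion {lam : ℝ} {p : ℕ → ℝ} (hlam : 0 ≤ lam)
    (hp : ∀ k, p k ∈ Set.Icc (0:ℝ) 1) (hpsum : Summable p)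
    {s : ℝ} (hs0 : 0 < s) (hs1 : s ≤ 1/2) :
    lam * s + ∑' k, -Real.log (1 - p k * s)
      = ∑' m, pbCoeff lam p m * s ^ m := by
  have hs1' : s < 1 := by linarith
  have hps : ∀ k, 0 ≤ p k * s ∧ p k * s ≤ s := fun k =>
    ⟨mul_nonneg (hp k).1 hs0.le, mul_le_of_le_one_left hs0.le (hp k).2⟩
  set f : ℕ → ℕ → ℝ := fun k m => (p k * s) ^ (m + 1) / (m + 1) with hf
  have hrow : ∀ k, HasSum (f k) (-Real.log (1 - p k * s)) := by
    intro k
    exact Real.hasSum_pow_div_log_of_abs_lt_one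
      (by rw [abs_of_nonneg (hps k).1]; linarith [(hps k).2])
  have hfnn : ∀ k m, 0 ≤ f k m := fun k m => by
    have := (hps k).1; positivity
  have hLnn : ∀ k, 0 ≤ -Real.log (1 - p k * s) := fun k =>
    neglog_nonneg (hps k).1 (by linarith [(hps k).2])
  have hLle : ∀ k, -Real.log (1 - p k * s) ≤ (s / (1 - s)) * p k := by
    intro k
    have h1 := neglog_le (hps k).1 (show (0:ℝ) < 1 - s by linarith)
      (by linarith [(hps k).2])
    calc -Real.log (1 - p k * s) ≤ p k * s / (1 - s) := h1
    _ = (s / (1 - s)) * p k := by ring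
  have hLsum : Summable (fun k => -Real.log (1 - p k * s)) :=
    Summable.of_nonneg_of_le hLnn hLle (hpsum.mul_left _)
  have huncurry : Summable (Function.uncurry f) := by
    refine (summable_prod_of_nonneg (fun q => hfnn q.1 q.2)).mpr
      ⟨fun k => (hrow k).summable, ?_⟩
    apply Summable.congr hLsum
    intro k
    exact ((hrow k).tsum_eq).symm
  have hswap : ∑' k, ∑' m, f k m = ∑' m, ∑' k, f k m := by
    exact (Summable.tsum_comm huncurry).symm
  have hcol : ∀ m : ℕ, ∑' k, f k m = (∑' k, p k ^ (m + 1)) * (s ^ (m + 1) / (m + 1)) := by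
    intro m
    simp only [hf]
    have : ∀ k, (p k * s) ^ (m + 1) / ((m:ℝ) + 1)
        = p k ^ (m + 1) * (s ^ (m + 1) / ((m:ℝ) + 1)) := by
      intro k; rw [mul_pow]; ring
    simp_rw [this]
    exact tsum_mul_right
  have hrowsum : ∑' k, -Real.log (1 - p k * s) = ∑' m, ∑' k, f k m := by
    rw [← hswap]
    congr 1
    funext k
    exact ((hrow k).tsum_eq).symm
  -- RHS manipulation
  have hcb := pbCoeff_bounds hlam hp hpsum
  have hrhs_sum : Summable (fun m => pbCoeff lam p m * s ^ m) :=
    coeff_summable hcb hs0.le hs1'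
  rw [Summable.tsum_eq_zero_add hrhs_sum]
  simp only [pbCoeff, pow_zero, mul_one, zero_add]
  have hsplit : ∀ m : ℕ,
      ((if m = 0 then lam else 0) + (∑' k, p k ^ (m + 1)) / (m + 1)) * s ^ (m + 1)
      = (if m = 0 then lam * s else 0)
        + (∑' k, p k ^ (m + 1)) * (s ^ (m + 1) / ((m:ℝ) + 1)) := by
    intro m
    split <;> rename_i hm
    · subst hm; push_cast; ring
    · push_cast; ring
  simp_rw [hsplit]
  have hsum1 : Summable (fun m : ℕ => if m = 0 then lam * s else 0) := by
    apply summable_of_finite_support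
    apply Set.Finite.subset (Set.finite_singleton 0)
    intro m hm
    simp only [Function.mem_support, ne_eq, ite_eq_right_iff, not_forall] at hm
    simp [hm.1]
  have hsum2 : Summable (fun m : ℕ => (∑' k, p k ^ (m + 1)) * (s ^ (m + 1) / ((m:ℝ) + 1))) := by
    have := (summable_prod_of_nonneg (f := Function.uncurry (fun m k => f k m))
      (fun q => hfnn q.2 q.1)).mp (huncurry.prod_symm)
    apply Summable.congr this.2
    intro m
    exact hcol m
  rw [Summable.tsum_add hsum1 hsum2]
  have hite : ∑' m : ℕ, (if m = 0 then lam * s else 0) = lam * s := by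
    rw [tsum_eq_single 0 (fun m hm => by simp [hm])]
    simp
  rw [hite, hrowsum]
  congr 1
  exact tsum_congr fun m => hcol m

noncomputable def pbFactor (lam : ℝ) (p : ℕ → ℝ) (r : ℝ) : ℕ → ℝ≥0∞
  | 0 => ENNReal.ofReal (Real.exp (lam * (r - 1)))
  | (j + 1) => ENNReal.ofReal (1 - p j * (1 - r))



section System
variable {Ω : Type*} [MeasurableSpace Ω] (μ : Measure Ω) [IsProbabilityMeasure μ]
  (lam : ℝ) (p : ℕ → ℝ) (Z : ℕ → Ω → ℕ)

-- expectation of r^X over a discrete ℕ-valued rv, via its law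
lemma lint_pow (X : Ω → ℕ) (hX : Measurable X) (r : ℝ) :
    ∫⁻ ω, ENNReal.ofReal (r ^ X ω) ∂μ
      = ∑' n : ℕ, ENNReal.ofReal (r ^ n) * μ {ω | X ω = n} := by
  have h1 : ∫⁻ ω, ENNReal.ofReal (r ^ X ω) ∂μ
      = ∫⁻ n, ENNReal.ofReal (r ^ n) ∂(Measure.map X μ) :=
    (lintegral_map (f := fun n : ℕ => ENNReal.ofReal (r ^ n)) measurable_from_top hX).symm
  rw [h1, lintegral_countable' (fun n => ENNReal.ofReal (r ^ n))]
  congr 1; ext n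
  rw [Measure.map_apply hX (measurableSet_singleton n)]
  rfl

lemma bern_factor (pk : ℝ) (hpk : pk ∈ Set.Icc (0:ℝ) 1) (X : Ω → ℕ) (hX : Measurable X)
    (h01 : ∀ ω, X ω ≤ 1) (hb : μ {ω | X ω = 1} = ENNReal.ofReal pk)
    (r : ℝ) (hr0 : 0 ≤ r) (hr1 : r ≤ 1) :
    ∫⁻ ω, ENNReal.ofReal (r ^ X ω) ∂μ = ENNReal.ofReal (1 - pk * (1 - r)) := by
  rw [lint_pow μ X hX r]
  have h0 : μ {ω | X ω = 0} = 1 - ENNReal.ofReal pk := by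
    have hc : {ω | X ω = 0} = {ω | X ω = 1}ᶜ := by
      ext ω; have := h01 ω; simp only [Set.mem_setOf_eq, Set.mem_compl_iff]; omega
    rw [hc, measure_compl (show MeasurableSet {ω | X ω = 1} from hX (measurableSet_singleton 1))
      (measure_ne_top μ _), hb, measure_univ]
  have hz : ∀ n ∉ ({0, 1} : Finset ℕ), ENNReal.ofReal (r ^ n) * μ {ω | X ω = n} = 0 := by
    intro n hn
    have : {ω | X ω = n} = ∅ := by
      refine Set.eq_empty_iff_forall_notMem.mpr fun ω hω => ?_
      simp only [Set.mem_setOf_eq] at hω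
      have := h01 ω
      simp only [Finset.mem_insert, Finset.mem_singleton] at hn
      omega
    rw [this, measure_empty, mul_zero]
  rw [tsum_eq_sum hz]
  rw [Finset.sum_insert (by simp), Finset.sum_singleton, h0, hb]
  rw [pow_zero, pow_one, ENNReal.ofReal_one, one_mul]
  have hp1 : (1 : ℝ≥0∞) - ENNReal.ofReal pk = ENNReal.ofReal (1 - pk) := by
    rw [← ENNReal.ofReal_one, ← ENNReal.ofReal_sub _ hpk.1]
  rw [hp1, ← ENNReal.ofReal_mul hr0, ← ENNReal.ofReal_add (by linarith [hpk.2]) (mul_nonneg hr0 hpk.1)]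
  congr 1; ring

lemma pois_factor (lam : ℝ) (hlam : 0 ≤ lam) (X : Ω → ℕ) (hX : Measurable X)
    (hpois : ∀ n : ℕ, μ {ω | X ω = n}
      = ENNReal.ofReal (Real.exp (-lam) * lam ^ n / n.factorial))
    (r : ℝ) (hr0 : 0 ≤ r) :
    ∫⁻ ω, ENNReal.ofReal (r ^ X ω) ∂μ = ENNReal.ofReal (Real.exp (lam * (r - 1))) := by
  rw [lint_pow μ X hX r]
  have hterm : ∀ n : ℕ, ENNReal.ofReal (r ^ n) * μ {ω | X ω = n}
      = ENNReal.ofReal (Real.exp (-lam) * ((lam * r) ^ n / n.factorial)) := by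
    intro n
    rw [hpois n, ← ENNReal.ofReal_mul (by positivity)]
    congr 1
    field_simp
    ring
  simp_rw [hterm]
  have hsummand : Summable (fun n : ℕ => Real.exp (-lam) * ((lam * r) ^ n / n.factorial)) := by
    apply Summable.mul_left
    exact (NormedSpace.expSeries_div_summable (lam * r))
  rw [← ENNReal.ofReal_tsum_of_nonneg (fun n => by positivity) hsummand]
  congr 1
  rw [tsum_mul_left]
  have hexp : ∑' n : ℕ, (lam * r) ^ n / (n.factorial : ℝ) = Real.exp (lam * r) := by
    rw [Real.exp_eq_exp_ℝ, NormedSpace.exp_eq_tsum_div]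
  rw [hexp, ← Real.exp_add]
  congr 1; ring


-- a.e. eventual vanishing
lemma ae_ev_zero (hp : ∀ k, p k ∈ Set.Icc (0:ℝ) 1) (hpsum : Summable p)
    (hbern01 : ∀ k ω, Z (k + 1) ω ≤ 1)
    (hbern : ∀ k, μ {ω | Z (k + 1) ω = 1} = ENNReal.ofReal (p k)) :
    ∀ᵐ ω ∂μ, ∃ N, ∀ k, N ≤ k → Z k ω = 0 := by
  have hsum : (∑' k, μ {ω | Z (k + 1) ω = 1}) ≠ (⊤ : ENNReal) := by
    simp_rw [hbern]
    rw [← ENNReal.ofReal_tsum_of_nonneg (fun k => (hp k).1) hpsum]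
    exact ENNReal.ofReal_ne_top
  have h0 := measure_setOf_frequently_eq_zero (μ := μ) hsum
  rw [← nonpos_iff_eq_zero] at h0
  have h0' : ∀ᵐ ω ∂μ, ¬ (∃ᶠ k in atTop, ω ∈ {ω | Z (k+1) ω = 1}) := by
    rw [MeasureTheory.ae_iff]
    refine le_antisymm (le_trans (measure_mono ?_) h0) (by simp)
    intro ω hω
    simpa only [Set.mem_setOf_eq, not_not] using hω
  filter_upwards [h0'] with ω hω
  rw [Filter.not_frequently] at hω
  obtain ⟨N, hN⟩ := eventually_atTop.mp hω
  refine ⟨N + 1, fun k hk => ?_⟩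
  obtain ⟨j, rfl⟩ : ∃ j, k = j + 1 := ⟨k - 1, by omega⟩
  have h1 := hN j (by omega)
  have h2 := hbern01 j ω
  omega


lemma prod_formula (hlam : 0 ≤ lam) (hp : ∀ k, p k ∈ Set.Icc (0:ℝ) 1)
    (hZmeas : ∀ k, Measurable (Z k))
    (hpois : ∀ n : ℕ, μ {ω | Z 0 ω = n}
      = ENNReal.ofReal (Real.exp (-lam) * lam ^ n / n.factorial))
    (hbern01 : ∀ k ω, Z (k + 1) ω ≤ 1)
    (hbern : ∀ k, μ {ω | Z (k + 1) ω = 1} = ENNReal.ofReal (p k))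
    (hindep : iIndepFun Z μ)
    (r : ℝ) (hr0 : 0 ≤ r) (hr1 : r ≤ 1) (N : ℕ) :
    ∫⁻ ω, ENNReal.ofReal (r ^ (∑ k ∈ Finset.range N, Z k ω)) ∂μ
      = ∏ k ∈ Finset.range N, pbFactor lam p r k := by
  induction N with
  | zero => simp
  | succ N ih =>
    have hsplit : ∀ ω, ENNReal.ofReal (r ^ (∑ k ∈ Finset.range (N+1), Z k ω))
        = ENNReal.ofReal (r ^ (∑ k ∈ Finset.range N, Z k ω))
          * ENNReal.ofReal (r ^ (Z N ω)) := by
      intro ω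
      rw [Finset.sum_range_succ, pow_add, ENNReal.ofReal_mul (by positivity)]
    simp_rw [hsplit]
    have hSmeas : Measurable (fun ω => ∑ k ∈ Finset.range N, Z k ω) :=
      Finset.measurable_sum _ fun k _ => hZmeas k
    have hφ : Measurable (fun n : ℕ => ENNReal.ofReal (r ^ n)) := measurable_from_top
    have hInd : IndepFun (∑ k ∈ Finset.range N, Z k) (Z N) μ :=
      hindep.indepFun_sum_range_succ hZmeas N
    have hInd2 : IndepFun (fun ω => ENNReal.ofReal (r ^ (∑ k ∈ Finset.range N, Z k ω)))
        (fun ω => ENNReal.ofReal (r ^ (Z N ω))) μ := by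
      have := hInd.comp hφ hφ
      convert this using 2 with ω
      simp [Function.comp, Finset.sum_apply]
      rfl
    have hmul := lintegral_mul_eq_lintegral_mul_lintegral_of_indepFun
      (μ := μ) (hφ.comp hSmeas) (hφ.comp (hZmeas N)) hInd2
    have hmul' : ∫⁻ ω, ENNReal.ofReal (r ^ (∑ k ∈ Finset.range N, Z k ω))
          * ENNReal.ofReal (r ^ (Z N ω)) ∂μ
        = (∫⁻ ω, ENNReal.ofReal (r ^ (∑ k ∈ Finset.range N, Z k ω)) ∂μ)
          * ∫⁻ ω, ENNReal.ofReal (r ^ (Z N ω)) ∂μ := hmul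
    rw [hmul', ih, Finset.prod_range_succ]
    congr 1
    match N with
    | 0 =>
      simp only [pbFactor]
      exact pois_factor μ lam hlam (Z 0) (hZmeas 0) hpois r hr0
    | (j + 1) =>
      simp only [pbFactor]
      exact bern_factor μ (p j) (hp j) (Z (j+1)) (hZmeas (j+1))
        (hbern01 j) (hbern j) r hr0 hr1


lemma pgf_formula (hlam : 0 ≤ lam) (hp : ∀ k, p k ∈ Set.Icc (0:ℝ) 1) (hpsum : Summable p)
    (hZmeas : ∀ k, Measurable (Z k))
    (hpois : ∀ n : ℕ, μ {ω | Z 0 ω = n}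
      = ENNReal.ofReal (Real.exp (-lam) * lam ^ n / n.factorial))
    (hbern01 : ∀ k ω, Z (k + 1) ω ≤ 1)
    (hbern : ∀ k, μ {ω | Z (k + 1) ω = 1} = ENNReal.ofReal (p k))
    (hindep : iIndepFun Z μ)
    (r : ℝ) (hr0 : 0 < r) (hr1 : r < 1) :
    ∫⁻ ω, ENNReal.ofReal (r ^ (∑' k, Z k ω)) ∂μ
      = ENNReal.ofReal (Real.exp
          (lam * (r - 1) - ∑' k, -Real.log (1 - p k * (1 - r)))) := by
  set L : ℕ → ℝ := fun k => -Real.log (1 - p k * (1 - r)) with hL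
  clear_value L
  have ha : ∀ k, 0 ≤ p k * (1 - r) ∧ p k * (1 - r) + r ≤ 1 := by
    intro k
    constructor
    · exact mul_nonneg (hp k).1 (by linarith)
    · nlinarith [(hp k).1, (hp k).2]
  have hLnonneg : ∀ k, 0 ≤ L k := by
    intro k
    simp only [hL]
    exact neglog_nonneg (ha k).1 (by linarith [(ha k).2])
  have hLle : ∀ k, L k ≤ ((1 - r) / r) * p k := by
    intro k
    simp only [hL]
    have := neglog_le (ha k).1 hr0 (ha k).2
    calc -Real.log (1 - p k * (1 - r)) ≤ p k * (1 - r) / r := this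
    _ = ((1 - r) / r) * p k := by ring
  have hLsum : Summable L :=
    Summable.of_nonneg_of_le hLnonneg hLle (hpsum.mul_left _)
  -- RHS partial product identity
  have hprod : ∀ N : ℕ, ∏ k ∈ Finset.range (N + 1), pbFactor lam p r k
      = ENNReal.ofReal (Real.exp (lam * (r - 1) - ∑ k ∈ Finset.range N, L k)) := by
    intro N
    rw [Finset.prod_range_succ']
    have hfac : ∀ j, pbFactor lam p r (j + 1) = ENNReal.ofReal (Real.exp (-L j)) := by
      intro j
      simp only [pbFactor, hL]
      rw [neg_neg, Real.exp_log (by linarith [(ha j).2, hr0])]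

    simp_rw [hfac]
    rw [← ENNReal.ofReal_prod_of_nonneg (fun i _ => (Real.exp_pos _).le)]
    simp only [pbFactor]
    rw [← ENNReal.ofReal_mul (by positivity), ← Real.exp_sum, ← Real.exp_add]
    congr 1
    rw [Finset.sum_neg_distrib]
    ring
  -- RHS tendsto
  have hRHS : Tendsto (fun N => ∏ k ∈ Finset.range (N + 1), pbFactor lam p r k) atTop
      (𝓝 (ENNReal.ofReal (Real.exp (lam * (r - 1) - ∑' k, L k)))) := by
    simp_rw [hprod]
    have h1 : Tendsto (fun N => ∑ k ∈ Finset.range N, L k) atTop (𝓝 (∑' k, L k)) :=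
      hLsum.hasSum.tendsto_sum_nat
    have h2 : Tendsto (fun x : ℝ => ENNReal.ofReal (Real.exp (lam * (r - 1) - x)))
        (𝓝 (∑' k, L k)) (𝓝 (ENNReal.ofReal (Real.exp (lam * (r - 1) - ∑' k, L k)))) := by
      apply Continuous.tendsto
      exact ENNReal.continuous_ofReal.comp (Real.continuous_exp.comp (by continuity))
    exact h2.comp h1
  -- LHS tendsto via dominated convergence
  have hSmeas : ∀ N, Measurable (fun ω => ∑ k ∈ Finset.range N, Z k ω) :=
    fun N => Finset.measurable_sum _ fun k _ => hZmeas k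
  have hφ : Measurable (fun n : ℕ => ENNReal.ofReal (r ^ n)) := measurable_from_top
  have hLHS : Tendsto (fun N => ∫⁻ ω, ENNReal.ofReal (r ^ (∑ k ∈ Finset.range N, Z k ω)) ∂μ)
      atTop (𝓝 (∫⁻ ω, ENNReal.ofReal (r ^ (∑' k, Z k ω)) ∂μ)) := by
    apply tendsto_lintegral_of_dominated_convergence (bound := fun _ => 1)
    · exact fun N => hφ.comp (hSmeas N)
    · intro N
      filter_upwards with ω
      calc ENNReal.ofReal (r ^ (∑ k ∈ Finset.range N, Z k ω))
          ≤ ENNReal.ofReal 1 :=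
            ENNReal.ofReal_le_ofReal (pow_le_one₀ hr0.le hr1.le)
      _ = 1 := ENNReal.ofReal_one
    · simp
    · filter_upwards [ae_ev_zero μ p Z hp hpsum hbern01 hbern] with ω hω
      obtain ⟨N₀, hN₀⟩ := hω
      apply tendsto_atTop_of_eventually_const (i₀ := N₀)
      intro M hM
      have hsum : ∑ k ∈ Finset.range M, Z k ω = ∑' k, Z k ω := by
        rw [nat_tsum_eq hN₀]
        exact (Finset.sum_subset (Finset.range_subset_range.mpr hM)
          (fun k _ hk => hN₀ k (by simpa using hk))).symm
      rw [hsum]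
  -- combine
  have hEq : ∀ N, ∫⁻ ω, ENNReal.ofReal (r ^ (∑ k ∈ Finset.range (N+1), Z k ω)) ∂μ
      = ∏ k ∈ Finset.range (N + 1), pbFactor lam p r k :=
    fun N => prod_formula μ lam p Z hlam hp hZmeas hpois hbern01 hbern hindep r hr0.le hr1.le
      (N + 1)
  have hLHS' : Tendsto (fun N => ∏ k ∈ Finset.range (N + 1), pbFactor lam p r k) atTop
      (𝓝 (∫⁻ ω, ENNReal.ofReal (r ^ (∑' k, Z k ω)) ∂μ)) := by
    exact (hLHS.comp (tendsto_add_atTop_nat 1)).congr (fun N => hEq N)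
  exact tendsto_nhds_unique hLHS' hRHS


end System

end Aux

/-- Lemma C.1(2): two extended Poisson-binomial distributions, with parameters
`(λ, p₁, p₂, …)` and `(λ', p'₁, p'₂, …)` where the `p`s are nonincreasing `[0,1]`-sequences
with finite sum, coincide if and only if the parameters coincide. The distributions are
realized as laws of `∑ₖ Z k` with `Z 0 ~ Poisson(λ)` and `Z (k+1) ~ Bernoulli(p k)`
independent. -/
theorem stmt5 {Ω Ω' : Type*} [MeasurableSpace Ω] [MeasurableSpace Ω']
    (μ : Measure Ω) [IsProbabilityMeasure μ] (μ' : Measure Ω') [IsProbabilityMeasure μ']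
    (lam lam' : ℝ) (hlam : 0 ≤ lam) (hlam' : 0 ≤ lam')
    (p p' : ℕ → ℝ)
    (hp : ∀ k, p k ∈ Set.Icc (0 : ℝ) 1) (hp' : ∀ k, p' k ∈ Set.Icc (0 : ℝ) 1)
    (hpmono : Antitone p) (hpmono' : Antitone p')
    (hpsum : Summable p) (hpsum' : Summable p')
    (Z : ℕ → Ω → ℕ) (Z' : ℕ → Ω' → ℕ)
    (hZmeas : ∀ k, Measurable (Z k)) (hZmeas' : ∀ k, Measurable (Z' k))
    (hpois : ∀ n : ℕ, μ {ω | Z 0 ω = n}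
      = ENNReal.ofReal (Real.exp (-lam) * lam ^ n / n.factorial))
    (hpois' : ∀ n : ℕ, μ' {ω | Z' 0 ω = n}
      = ENNReal.ofReal (Real.exp (-lam') * lam' ^ n / n.factorial))
    (hbern01 : ∀ k ω, Z (k + 1) ω ≤ 1) (hbern01' : ∀ k ω, Z' (k + 1) ω ≤ 1)
    (hbern : ∀ k, μ {ω | Z (k + 1) ω = 1} = ENNReal.ofReal (p k))
    (hbern' : ∀ k, μ' {ω | Z' (k + 1) ω = 1} = ENNReal.ofReal (p' k))
    (hindep : iIndepFun Z μ)
    (hindep' : iIndepFun Z' μ') :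
    Measure.map (fun ω => ∑' k, Z k ω) μ = Measure.map (fun ω' => ∑' k, Z' k ω') μ'
      ↔ (lam = lam' ∧ p = p') := by
  have hSmeas : Measurable (fun ω => ∑' k, Z k ω) := S_meas Z hZmeas
  have hSmeas' : Measurable (fun ω' => ∑' k, Z' k ω') := S_meas Z' hZmeas'
  have hPGF : ∀ r : ℝ, 0 < r → r < 1 →
      ∫⁻ x, ENNReal.ofReal (r ^ x) ∂(Measure.map (fun ω => ∑' k, Z k ω) μ)
        = ENNReal.ofReal (Real.exp
            (lam * (r - 1) - ∑' k, -Real.log (1 - p k * (1 - r)))) := by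
    intro r hr0 hr1
    rw [lintegral_map measurable_from_top hSmeas]
    exact pgf_formula μ lam p Z hlam hp hpsum hZmeas hpois hbern01 hbern hindep r hr0 hr1
  have hPGF' : ∀ r : ℝ, 0 < r → r < 1 →
      ∫⁻ x, ENNReal.ofReal (r ^ x) ∂(Measure.map (fun ω' => ∑' k, Z' k ω') μ')
        = ENNReal.ofReal (Real.exp
            (lam' * (r - 1) - ∑' k, -Real.log (1 - p' k * (1 - r)))) := by
    intro r hr0 hr1
    rw [lintegral_map measurable_from_top hSmeas']
    exact pgf_formula μ' lam' p' Z' hlam' hp' hpsum' hZmeas' hpois' hbern01' hbern' hindep' r hr0 hr1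
  constructor
  · -- forward direction
    intro h
    have hF : ∀ s : ℝ, 0 < s → s ≤ 1/2 →
        lam * s + ∑' k, -Real.log (1 - p k * s)
          = lam' * s + ∑' k, -Real.log (1 - p' k * s) := by
      intro s hs0 hs1
      have hr0 : (0:ℝ) < 1 - s := by linarith
      have hr1 : 1 - s < 1 := by linarith
      have e1 := hPGF (1 - s) hr0 hr1
      have e2 := hPGF' (1 - s) hr0 hr1
      rw [h] at e1
      have e3 := e1.symm.trans e2
      rw [ENNReal.ofReal_eq_ofReal_iff (Real.exp_pos _).le (Real.exp_pos _).le,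
        Real.exp_eq_exp] at e3
      have hss : (1:ℝ) - (1 - s) = s := by ring
      rw [hss] at e3
      have hss2 : (1:ℝ) - s - 1 = -s := by ring
      rw [hss2] at e3
      linarith
    have hexp : ∀ s : ℝ, 0 < s → s ≤ 1/2 →
        ∑' m, pbCoeff lam p m * s ^ m = ∑' m, pbCoeff lam' p' m * s ^ m := by
      intro s hs0 hs1
      rw [← expansion hlam hp hpsum hs0 hs1, ← expansion hlam' hp' hpsum' hs0 hs1]
      exact hF s hs0 hs1
    set C : ℝ := (lam + ∑' k, p k) + (lam' + ∑' k, p' k) with hC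
    have hC1 : 0 ≤ lam + ∑' k, p k := add_nonneg hlam (tsum_nonneg fun k => (hp k).1)
    have hC2 : 0 ≤ lam' + ∑' k, p' k := add_nonneg hlam' (tsum_nonneg fun k => (hp' k).1)
    have hcb : ∀ m, 0 ≤ pbCoeff lam p m ∧ pbCoeff lam p m ≤ C := by
      intro m
      obtain ⟨h1, h2⟩ := pbCoeff_bounds hlam hp hpsum m
      exact ⟨h1, by rw [hC]; linarith⟩
    have hcb' : ∀ m, 0 ≤ pbCoeff lam' p' m ∧ pbCoeff lam' p' m ≤ C := by
      intro m
      obtain ⟨h1, h2⟩ := pbCoeff_bounds hlam' hp' hpsum' m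
      exact ⟨h1, by rw [hC]; linarith⟩
    have hcoef : pbCoeff lam p = pbCoeff lam' p' :=
      coeff_unique (by rw [hC]; linarith) hcb hcb' hexp
    have hmom : ∀ m : ℕ, 2 ≤ m → ∑' k, p k ^ m = ∑' k, p' k ^ m := by
      intro m hm
      obtain ⟨j, rfl⟩ : ∃ j, m = j + 2 := ⟨m - 2, by omega⟩
      have := congrFun hcoef (j + 2)
      simp only [pbCoeff, Nat.succ_ne_zero, if_neg (by omega : ¬ j + 1 = 0)] at this
      have hj : (0:ℝ) < (j:ℝ) + 1 + 1 := by positivity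
      field_simp at this
      convert this using 2 <;> push_cast <;> ring_nf
    have hpeq : p = p' := moments_unique hp hp' hpmono hpmono' hpsum hpsum' hmom
    have hc1 := congrFun hcoef 1
    norm_num [pbCoeff] at hc1
    have hMeq : ∑' k, p k = ∑' k, p' k := by rw [hpeq]
    exact ⟨by linarith, hpeq⟩
  · -- backward direction
    rintro ⟨rfl, rfl⟩
    set ν := Measure.map (fun ω => ∑' k, Z k ω) μ with hν
    set ν' := Measure.map (fun ω' => ∑' k, Z' k ω') μ' with hν'
    have hprobν : IsProbabilityMeasure ν := Measure.isProbabilityMeasure_map hSmeas.aemeasurable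
    have hprobν' : IsProbabilityMeasure ν' := Measure.isProbabilityMeasure_map hSmeas'.aemeasurable
    set a : ℕ → ℝ := fun n => (ν {n}).toReal with ha
    set a' : ℕ → ℝ := fun n => (ν' {n}).toReal with ha'
    have hab : ∀ n, 0 ≤ a n ∧ a n ≤ 1 := by
      intro n
      refine ⟨ENNReal.toReal_nonneg, ?_⟩
      rw [ha]
      simp only
      rw [← ENNReal.toReal_one]
      exact ENNReal.toReal_mono ENNReal.one_ne_top prob_le_one
    have hab' : ∀ n, 0 ≤ a' n ∧ a' n ≤ 1 := by
      intro n
      refine ⟨ENNReal.toReal_nonneg, ?_⟩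
      rw [ha']
      simp only
      rw [← ENNReal.toReal_one]
      exact ENNReal.toReal_mono ENNReal.one_ne_top prob_le_one
    have hsum_eq : ∀ (κ : Measure ℕ) (b : ℕ → ℝ), (∀ n, κ {n} = ENNReal.ofReal (b n)) →
        (∀ n, 0 ≤ b n ∧ b n ≤ 1) →
        ∀ s : ℝ, 0 < s → s < 1 →
        ∫⁻ x, ENNReal.ofReal (s ^ x) ∂κ = ENNReal.ofReal (∑' n, b n * s ^ n) := by
      intro κ b hb hb01 s hs0 hs1
      rw [lintegral_countable' (fun n => ENNReal.ofReal (s ^ n))]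
      have hterm : ∀ n : ℕ, ENNReal.ofReal (s ^ n) * κ {n} = ENNReal.ofReal (b n * s ^ n) := by
        intro n
        rw [hb n, ← ENNReal.ofReal_mul (by positivity)]
        ring_nf
      simp_rw [hterm]
      rw [← ENNReal.ofReal_tsum_of_nonneg
        (fun n => mul_nonneg (hb01 n).1 (by positivity))
        (coeff_summable hb01 hs0.le hs1)]
    have haeq : ∀ n, ν {n} = ENNReal.ofReal (a n) :=
      fun n => (ENNReal.ofReal_toReal (measure_ne_top ν _)).symm
    have haeq' : ∀ n, ν' {n} = ENNReal.ofReal (a' n) :=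
      fun n => (ENNReal.ofReal_toReal (measure_ne_top ν' _)).symm
    have hcc : ∀ s : ℝ, 0 < s → s ≤ 1/2 → ∑' n, a n * s ^ n = ∑' n, a' n * s ^ n := by
      intro s hs0 hs1
      have hs1' : s < 1 := by linarith
      have e1 := hsum_eq ν a haeq hab s hs0 hs1'
      have e2 := hsum_eq ν' a' haeq' hab' s hs0 hs1'
      have e3 := (hPGF s hs0 hs1').trans ((hPGF' s hs0 hs1').symm)
      rw [e1] at e3
      rw [e2] at e3
      rwa [ENNReal.ofReal_eq_ofReal_iff
        (tsum_nonneg fun n => mul_nonneg (hab n).1 (by positivity))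
        (tsum_nonneg fun n => mul_nonneg (hab' n).1 (by positivity))] at e3
    have haa : a = a' := coeff_unique zero_le_one hab hab' hcc
    rw [hν, hν'] at *
    apply MeasureTheory.Measure.ext_iff_singleton.mpr
    intro n
    rw [show Measure.map (fun ω => ∑' k, Z k ω) μ {n} = ν {n} from rfl,
      show Measure.map (fun ω' => ∑' k, Z' k ω') μ' {n} = ν' {n} from rfl,
      haeq n, haeq' n, haa]
end

section
/- Let (X_n)_{n≥1} be nonnegative-integer-valued random variables converging in distribution to a finite-valued random variable X, where each X_n is Poisson-binomial with nonincreasing parameter vector (p_{n,1}, ..., p_{n,K_n}). Then for each fixed k, the sequence (p_{n,k})_n converges as n → ∞. -/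
open MeasureTheory ProbabilityTheory Filter
open Polynomial Finset

namespace Stmt18Aux

noncomputable def Esym (N : ℕ) (f : ℕ → ℝ) (j : ℕ) : ℝ :=
  ∑ t ∈ (Finset.range N).powersetCard j, ∏ k ∈ t, f k



lemma coeff_prod_linear {ι : Type*} [DecidableEq ι] (s : Finset ι) (a b : ι → ℝ) (j : ℕ) :
    (∏ k ∈ s, (C (a k) + C (b k) * X)).coeff j
      = ∑ t ∈ s.powersetCard j, ((∏ k ∈ t, b k) * ∏ k ∈ s \ t, a k) := by
  induction s using Finset.induction_on generalizing j with
  | empty =>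
      cases j with
      | zero => simp
      | succ j =>
          rw [Finset.powersetCard_eq_empty.mpr (by simp)]
          simp [Polynomial.coeff_one]
  | insert x s hx ih =>
      have hsplit : (∏ k ∈ insert x s, (C (a k) + C (b k) * X))
          = C (a x) * (∏ k ∈ s, (C (a k) + C (b k) * X))
            + C (b x) * (X * (∏ k ∈ s, (C (a k) + C (b k) * X))) := by
        rw [Finset.prod_insert hx]; ring
      rw [hsplit, Polynomial.coeff_add, Polynomial.coeff_C_mul, Polynomial.coeff_C_mul]
      cases j with
      | zero =>
          simp only [Polynomial.coeff_X_mul_zero, mul_zero, add_zero, ih 0]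
          simp [Finset.sdiff_empty, Finset.prod_insert hx]
      | succ j =>
          rw [Polynomial.coeff_X_mul, ih, ih]
          rw [Finset.powersetCard_succ_insert hx]
          rw [Finset.sum_union]
          · congr 1
            · rw [Finset.mul_sum]
              refine Finset.sum_congr rfl fun t ht => ?_
              have hts : t ⊆ s := (Finset.mem_powersetCard.mp ht).1
              have hxt : x ∉ t := fun h => hx (hts h)
              have : insert x s \ t = insert x (s \ t) := by
                rw [Finset.insert_sdiff_of_notMem _ hxt]
              rw [this, Finset.prod_insert (fun h => hx (Finset.mem_sdiff.mp h).1)]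
              ring
            · rw [Finset.mul_sum, Finset.sum_image]
              · refine Finset.sum_congr rfl fun t ht => ?_
                have hts : t ⊆ s := (Finset.mem_powersetCard.mp ht).1
                have hxt : x ∉ t := fun h => hx (hts h)
                rw [Finset.prod_insert hxt]
                have hins : insert x s \ insert x t = s \ t := by
                  ext y
                  simp only [Finset.mem_sdiff, Finset.mem_insert, not_or]
                  constructor
                  · rintro ⟨hy1, hy2, hy3⟩
                    rcases hy1 with rfl | hy1
                    · exact absurd rfl hy2
                    · exact ⟨hy1, hy3⟩
                  · rintro ⟨hy1, hy2⟩
                    exact ⟨Or.inr hy1, fun h => hx (h ▸ hy1), hy2⟩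
                rw [hins]; ring
              · intro t ht u hu h
                have hxt : x ∉ t := fun hh => hx ((Finset.mem_powersetCard.mp ht).1 hh)
                have hxu : x ∉ u := fun hh => hx ((Finset.mem_powersetCard.mp hu).1 hh)
                have := congrArg (fun z : Finset ι => z.erase x) h
                simpa [Finset.erase_insert hxt, Finset.erase_insert hxu] using this
          · rw [Finset.disjoint_left]
            intro t ht htimg
            obtain ⟨u, hu, rfl⟩ := Finset.mem_image.mp htimg
            have hts : insert x u ⊆ s := (Finset.mem_powersetCard.mp ht).1
            exact hx (hts (Finset.mem_insert_self x u))



variable {Ω : Type*} [MeasurableSpace Ω]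

lemma pb_pmf (μ : Measure Ω) [IsProbabilityMeasure μ] (K : ℕ) (p : ℕ → ℝ)
    (hp01 : ∀ k, p k ∈ Set.Icc (0 : ℝ) 1)
    (Y : ℕ → Ω → ℕ) (hXmeas : ∀ k, Measurable (Y k))
    (hX01 : ∀ k ω, Y k ω ≤ 1)
    (hXp : ∀ k, μ {ω | Y k ω = 1} = ENNReal.ofReal (p k))
    (hindep : iIndepFun Y μ) (j : ℕ) :
    (μ {ω | ∑ k ∈ Finset.range K, Y k ω = j}).toReal
      = (∏ k ∈ Finset.range K, (C (1 - p k) + C (p k) * X)).coeff j := by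
  classical
  -- each Y k takes values 0 or 1
  have hbin : ∀ k ω, Y k ω = 0 ∨ Y k ω = 1 := fun k ω =>
    Nat.le_one_iff_eq_zero_or_eq_one.mp (hX01 k ω)
  -- measurability of value events
  have hms : ∀ k (c : ℕ), MeasurableSet {ω | Y k ω = c} := fun k c =>
    (hXmeas k) (measurableSet_singleton c)
  have hms' : ∀ k (c : ℕ),
      MeasurableSet[(inferInstance : MeasurableSpace ℕ).comap (Y k)] {ω | Y k ω = c} :=
    fun k c => ⟨{c}, measurableSet_singleton c, rfl⟩
  -- measures of value events
  have hX0 : ∀ k, {ω | Y k ω = 0} = {ω | Y k ω = 1}ᶜ := by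
    intro k
    ext ω
    simp only [Set.mem_setOf_eq, Set.mem_compl_iff]
    rcases hbin k ω with h | h <;> simp [h]
  have hm1 : ∀ k, μ {ω | Y k ω = 1} = ENNReal.ofReal (p k) := hXp
  have hm0 : ∀ k, μ {ω | Y k ω = 0} = ENNReal.ofReal (1 - p k) := by
    intro k
    rw [hX0, measure_compl (hms k 1) (measure_ne_top μ _), hm1,
      measure_univ, ← ENNReal.ofReal_one, ← ENNReal.ofReal_sub _ (hp01 k).1]
  -- the intersection events
  set A : Finset ℕ → Set Ω :=
    fun t => ⋂ k ∈ Finset.range K, {ω | Y k ω = if k ∈ t then 1 else 0} with hA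
  -- event decomposition
  have hdecomp : {ω | ∑ k ∈ Finset.range K, Y k ω = j}
      = ⋃ t ∈ (Finset.range K).powersetCard j, A t := by
    ext ω
    simp only [Set.mem_setOf_eq, Set.mem_iUnion, hA, Set.mem_iInter, Set.mem_setOf_eq]
    constructor
    · intro hsum
      refine ⟨(Finset.range K).filter (fun k => Y k ω = 1), ?_, ?_⟩
      · rw [Finset.mem_powersetCard]
        refine ⟨Finset.filter_subset _ _, ?_⟩
        rw [← hsum]
        rw [Finset.card_filter]
        refine (Finset.sum_congr rfl fun k _ => ?_).symm
        rcases hbin k ω with h | h <;> simp [h]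
      · intro k hk
        rcases hbin k ω with h | h <;> simp [h, Finset.mem_filter, hk]
    · rintro ⟨t, ht, hω⟩
      rw [Finset.mem_powersetCard] at ht
      calc ∑ k ∈ Finset.range K, Y k ω
          = ∑ k ∈ Finset.range K, (if k ∈ t then 1 else 0) :=
            Finset.sum_congr rfl fun k hk => hω k hk
        _ = t.card := by
            rw [Finset.sum_ite_mem, Finset.inter_comm,
              (Finset.inter_eq_left).mpr ht.1]
            simp
        _ = j := ht.2
  -- A t is measurable
  have hAmeas : ∀ t, MeasurableSet (A t) := fun t =>
    MeasurableSet.biInter (Set.to_countable _) fun k _ => hms k _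
  -- pairwise disjoint
  have hdisj : Set.PairwiseDisjoint ((Finset.range K).powersetCard j : Set (Finset ℕ)) A := by
    intro t ht u hu htu
    rw [Finset.mem_coe, Finset.mem_powersetCard] at ht hu
    refine Set.disjoint_left.mpr fun ω hωt hωu => htu ?_
    simp only [hA, Set.mem_iInter, Set.mem_setOf_eq] at hωt hωu
    apply Finset.ext
    intro k
    constructor
    · intro hk
      have hkr : k ∈ Finset.range K := ht.1 hk
      have h1 := hωt k hkr
      have h2 := hωu k hkr
      rw [if_pos hk] at h1
      by_contra hku
      rw [if_neg hku] at h2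
      rw [h1] at h2
      exact one_ne_zero h2
    · intro hk
      have hkr : k ∈ Finset.range K := hu.1 hk
      have h1 := hωt k hkr
      have h2 := hωu k hkr
      rw [if_pos hk] at h2
      by_contra hkt
      rw [if_neg hkt] at h1
      rw [h2] at h1
      exact one_ne_zero h1
  -- measure of A t
  have hAmu : ∀ t ∈ (Finset.range K).powersetCard j,
      μ (A t) = ENNReal.ofReal ((∏ k ∈ t, p k) * ∏ k ∈ Finset.range K \ t, (1 - p k)) := by
    intro t ht
    rw [Finset.mem_powersetCard] at ht
    rw [hA]
    rw [hindep.meas_biInter (fun k _ => hms' k _)]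
    have : ∀ k ∈ Finset.range K,
        μ {ω | Y k ω = if k ∈ t then 1 else 0}
          = ENNReal.ofReal (if k ∈ t then p k else 1 - p k) := by
      intro k _
      by_cases hk : k ∈ t <;> simp [hk, hm1, hm0]
    rw [Finset.prod_congr rfl this, ← ENNReal.ofReal_prod_of_nonneg]
    · congr 1
      rw [← Finset.prod_sdiff ht.1]
      rw [mul_comm]
      congr 1
      · exact Finset.prod_congr rfl fun k hk => by rw [if_pos hk]
      · exact Finset.prod_congr rfl fun k hk => by
          rw [if_neg (Finset.mem_sdiff.mp hk).2]
    · intro k _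
      by_cases hk : k ∈ t <;> simp [hk, (hp01 k).1, (hp01 k).2, sub_nonneg]
  -- put it together
  rw [hdecomp, measure_biUnion_finset hdisj (fun t _ => hAmeas t),
    coeff_prod_linear]
  rw [ENNReal.toReal_sum (fun t ht => by rw [hAmu t ht]; exact ENNReal.ofReal_ne_top)]
  refine Finset.sum_congr rfl fun t ht => ?_
  rw [hAmu t ht, ENNReal.toReal_ofReal]
  have ht' := (Finset.mem_powersetCard.mp ht).1
  refine mul_nonneg (Finset.prod_nonneg fun k _ => (hp01 k).1)
    (Finset.prod_nonneg fun k _ => ?_)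
  simp [sub_nonneg, (hp01 k).2]




lemma eval_esymm (N : ℕ) (f : ℕ → ℝ) (j : ℕ) :
    MvPolynomial.eval (fun i : Fin N => f i) (MvPolynomial.esymm (Fin N) ℝ j)
      = Esym N f j := by
  classical
  have h1 : (MvPolynomial.aeval (fun i : Fin N => f i)) (MvPolynomial.esymm (Fin N) ℝ j)
      = ((Finset.univ : Finset (Fin N)).val.map (fun i : Fin N => f i)).esymm j :=
    MvPolynomial.aeval_esymm_eq_multiset_esymm _ _ _ _
  rw [show (MvPolynomial.eval (fun i : Fin N => f i)) (MvPolynomial.esymm (Fin N) ℝ j)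
      = (MvPolynomial.aeval (fun i : Fin N => f i)) (MvPolynomial.esymm (Fin N) ℝ j) from rfl,
    h1, Finset.esymm_map_val]
  -- now convert the powersetCard sum over `univ : Finset (Fin N)` to one over `range N`
  rw [Esym]
  have hmap : (Finset.range N) = (Finset.univ : Finset (Fin N)).map Fin.valEmbedding := by
    rw [Fin.map_valEmbedding_univ, ← Nat.Iio_eq_range]
  rw [hmap, Finset.powersetCard_map, Finset.sum_map]
  refine Finset.sum_congr rfl fun t _ => ?_
  show ∏ i ∈ t, f i.val = ∏ k ∈ t.map Fin.valEmbedding, f k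
  rw [Finset.prod_map]
  rfl

lemma eval_psum (N : ℕ) (f : ℕ → ℝ) (m : ℕ) :
    MvPolynomial.eval (fun i : Fin N => f i) (MvPolynomial.psum (Fin N) ℝ m)
      = ∑ k ∈ Finset.range N, f k ^ m := by
  rw [MvPolynomial.psum, map_sum, ← Fin.sum_univ_eq_sum_range (fun k => f k ^ m)]
  simp

lemma newton_eval (N : ℕ) (f : ℕ → ℝ) (m : ℕ) (hm : 0 < m) :
    ∑ k ∈ Finset.range N, f k ^ m
      = (-1 : ℝ) ^ (m + 1) * m * Esym N f m
        - ∑ a ∈ (Finset.HasAntidiagonal.antidiagonal m).filter (fun a => a.1 ∈ Set.Ioo 0 m),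
            (-1 : ℝ) ^ a.1 * Esym N f a.1 * ∑ k ∈ Finset.range N, f k ^ a.2 := by
  classical
  have h := MvPolynomial.psum_eq_mul_esymm_sub_sum (Fin N) ℝ m hm
  have h2 := congrArg (MvPolynomial.eval (fun i : Fin N => f i)) h
  rw [map_sub, map_mul, map_mul, map_pow, map_neg, map_one, map_natCast, map_sum] at h2
  rw [eval_psum, eval_esymm] at h2
  rw [h2]
  congr 1
  refine Finset.sum_congr rfl fun a _ => ?_
  rw [map_mul, map_mul, map_pow, map_neg, map_one, eval_psum, eval_esymm]

/-- coefficient of the composition with (1 + X)/2 -/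
lemma coeff_comp_half (Q : ℝ[X]) (j : ℕ) :
    (Q.comp (C (2⁻¹ : ℝ) + C 2⁻¹ * X)).coeff j
      = ∑ i ∈ Finset.range (Q.natDegree + 1),
          Q.coeff i * (i.choose j : ℝ) * (2⁻¹) ^ i := by
  rw [Polynomial.comp, Polynomial.eval₂_eq_sum_range, Polynomial.finset_sum_coeff]
  refine Finset.sum_congr rfl fun i _ => ?_
  have hfac : (C (2⁻¹ : ℝ) + C 2⁻¹ * X) ^ i = C ((2⁻¹ : ℝ) ^ i) * (1 + X) ^ i := by
    rw [C_pow, ← mul_pow]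
    congr 1
    rw [mul_add, mul_one]
  rw [hfac, ← mul_assoc, ← C_mul, Polynomial.coeff_C_mul, Polynomial.coeff_one_add_X_pow]
  ring

lemma coeff_comp_half_tsum (Q : ℝ[X]) (j : ℕ) :
    (Q.comp (C (2⁻¹ : ℝ) + C 2⁻¹ * X)).coeff j
      = ∑' i : ℕ, Q.coeff i * (i.choose j : ℝ) * (2⁻¹) ^ i := by
  rw [coeff_comp_half]
  refine (tsum_eq_sum fun i hi => ?_).symm
  have : Q.natDegree < i := by
    simpa [Finset.mem_range, Nat.lt_succ_iff, not_le] using hi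
  rw [Polynomial.coeff_eq_zero_of_natDegree_lt this]
  ring



lemma exists_tendsto_finset_sum {ι : Type*} (S : Finset ι) (f : ι → ℕ → ℝ)
    (h : ∀ a ∈ S, ∃ L, Tendsto (f a) atTop (nhds L)) :
    ∃ L, Tendsto (fun n => ∑ a ∈ S, f a n) atTop (nhds L) := by
  classical
  induction S using Finset.induction_on with
  | empty => exact ⟨0, by simpa using (tendsto_const_nhds : Tendsto (fun _ : ℕ => (0:ℝ)) atTop _)⟩
  | insert a S hx ih =>
      obtain ⟨L1, hL1⟩ := h a (Finset.mem_insert_self a S)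
      obtain ⟨L2, hL2⟩ := ih (fun b hb => h b (Finset.mem_insert_of_mem hb))
      exact ⟨L1 + L2, by simpa [Finset.sum_insert hx] using hL1.add hL2⟩


end Stmt18Aux

open Stmt18Aux

/-- Part of direction (1) ⇒ (2) of Lemma 5.4 (seq_bin): if the Poisson-binomial sums
`#ₙ = ∑_{k<Kₙ} X n k`, with nonincreasing success probabilities `p n k`, converge in
distribution to a finite-valued random variable (i.e. the point probabilities converge
to a probability distribution `q` on `ℕ`), then for each fixed `k` the sequence
`(p n k)ₙ` converges. -/
theorem stmt18 {Ω : Type*} [MeasurableSpace Ω] (μ : Measure Ω) [IsProbabilityMeasure μ]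
    (K : ℕ → ℕ) (p : ℕ → ℕ → ℝ)
    (hp01 : ∀ n k, p n k ∈ Set.Icc (0 : ℝ) 1)
    (hpos : ∀ n k, k < K n → 0 < p n k)
    (hmono : ∀ n, ∀ k k' : ℕ, k ≤ k' → p n k' ≤ p n k)
    (hzero : ∀ n k, K n ≤ k → p n k = 0)
    (X : ℕ → ℕ → Ω → ℕ) (hXmeas : ∀ n k, Measurable (X n k))
    (hX01 : ∀ n k ω, X n k ω ≤ 1)
    (hXp : ∀ n k, μ {ω | X n k ω = 1} = ENNReal.ofReal (p n k))
    (hindep : ∀ n, iIndepFun (fun k => X n k) μ)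
    (q : ℕ → ℝ) (hq : ∑' j, q j = 1)
    (hconvd : ∀ j : ℕ,
      Tendsto (fun n => (μ {ω | ∑ k ∈ Finset.range (K n), X n k ω = j}).toReal) atTop
        (nhds (q j))) :
    ∀ k : ℕ, ∃ L : ℝ, Tendsto (fun n => p n k) atTop (nhds L) := by
  classical
  have hp0 : ∀ n k, 0 ≤ p n k := fun n k => (hp01 n k).1
  have hp1 : ∀ n k, p n k ≤ 1 := fun n k => (hp01 n k).2
  -- the transformed parameters
  set x : ℕ → ℕ → ℝ := fun n k => p n k / (2 - p n k) with hxdef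
  have h2p : ∀ n k, (1:ℝ) ≤ 2 - p n k := fun n k => by linarith [hp1 n k]
  have h2p' : ∀ n k, (0:ℝ) < 2 - p n k := fun n k => lt_of_lt_of_le one_pos (h2p n k)
  have hx0 : ∀ n k, 0 ≤ x n k := fun n k => div_nonneg (hp0 n k) (le_of_lt (h2p' n k))
  have hx1 : ∀ n k, x n k ≤ 1 := fun n k => by
    rw [hxdef, div_le_one (h2p' n k)]; linarith [hp1 n k]
  have hxanti : ∀ n k k', k ≤ k' → x n k' ≤ x n k := by
    intro n k k' hkk
    rw [hxdef]
    rw [div_le_div_iff₀ (h2p' n k') (h2p' n k)]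
    have := hmono n k k' hkk
    nlinarith
  have hxzero : ∀ n k, K n ≤ k → x n k = 0 := fun n k hk => by
    rw [hxdef]; simp [hzero n k hk]
  have hpx : ∀ n k, p n k = 2 * x n k / (1 + x n k) := by
    intro n k
    rw [hxdef]
    have h1 : (2 - p n k) ≠ 0 := ne_of_gt (h2p' n k)
    field_simp
    ring
  -- step 1 : pmf = coefficients of Qp
  set Qp : ℕ → ℝ[X] :=
    fun n => ∏ k ∈ Finset.range (K n), (C (1 - p n k) + C (p n k) * Polynomial.X) with hQpdef
  have hPQ : ∀ n j, (μ {ω | ∑ k ∈ Finset.range (K n), X n k ω = j}).toReal = (Qp n).coeff j :=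
    fun n j => pb_pmf μ (K n) (p n) (hp01 n) (X n) (hXmeas n) (hX01 n) (hXp n) (hindep n) j
  -- step 2 : thinned polynomial
  set Qt : ℕ → ℝ[X] := fun n => (Qp n).comp (C 2⁻¹ + C 2⁻¹ * Polynomial.X) with hQtdef
  have hQt : ∀ n, Qt n
      = ∏ k ∈ Finset.range (K n), (C (1 - p n k / 2) + C (p n k / 2) * Polynomial.X) := by
    intro n
    rw [hQtdef, hQpdef]
    simp only
    rw [Polynomial.prod_comp]
    refine Finset.prod_congr rfl fun k _ => ?_
    rw [Polynomial.add_comp, Polynomial.mul_comp, Polynomial.C_comp, Polynomial.C_comp,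
      Polynomial.X_comp]
    rw [mul_add, ← mul_assoc, ← Polynomial.C_mul, ← add_assoc, ← Polynomial.C_add]
    have e1 : 1 - p n k + p n k * 2⁻¹ = 1 - p n k / 2 := by ring
    have e2 : p n k * 2⁻¹ = p n k / 2 := by ring
    rw [e1, e2]
  -- the limit point probabilities of the thinned variables
  set Pn : ℕ → ℕ → ℝ := fun n i => (μ {ω | ∑ k ∈ Finset.range (K n), X n k ω = i}).toReal
    with hPndef
  have hPnn : ∀ n i, 0 ≤ Pn n i := fun n i => ENNReal.toReal_nonneg
  have hPle1 : ∀ n i, Pn n i ≤ 1 := by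
    intro n i
    have h := prob_le_one (μ := μ) (s := {ω | ∑ k ∈ Finset.range (K n), X n k ω = i})
    have := ENNReal.toReal_mono (by simp) h
    simpa using this
  have hq0 : ∀ i, 0 ≤ q i := fun i =>
    ge_of_tendsto (hconvd i) (Filter.Eventually.of_forall fun n => hPnn n i)
  have hq1 : ∀ i, q i ≤ 1 := fun i =>
    le_of_tendsto (hconvd i) (Filter.Eventually.of_forall fun n => hPle1 n i)
  set qt : ℕ → ℝ := fun j => ∑' i, q i * (i.choose j : ℝ) * (2⁻¹ : ℝ) ^ i with hqtdef
  have hchoose_le : ∀ i j : ℕ, ((i.choose j : ℝ)) ≤ (i : ℝ) ^ j := by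
    intro i j
    calc ((i.choose j : ℝ)) ≤ (i:ℝ) ^ j / (j.factorial : ℝ) := Nat.choose_le_pow_div j i
      _ ≤ (i:ℝ) ^ j := by
          apply div_le_self (by positivity)
          exact_mod_cast Nat.one_le_iff_ne_zero.mpr j.factorial_pos.ne'
  have hsummable_bound : ∀ j : ℕ, Summable (fun i : ℕ => (i.choose j : ℝ) * (2⁻¹:ℝ) ^ i) := by
    intro j
    refine Summable.of_nonneg_of_le (fun i => by positivity) (fun i => ?_)
      (summable_pow_mul_geometric_of_norm_lt_one j (r := (2⁻¹:ℝ)) (by norm_num))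
    exact mul_le_mul_of_nonneg_right (hchoose_le i j) (by positivity)
  -- convergence of thinned coefficients
  have hqtconv : ∀ j, Tendsto (fun n => (Qt n).coeff j) atTop (nhds (qt j)) := by
    intro j
    have heq : (fun n => (Qt n).coeff j)
        = fun n => ∑' i, Pn n i * (i.choose j : ℝ) * (2⁻¹:ℝ) ^ i := by
      funext n
      rw [hQtdef]
      simp only
      rw [coeff_comp_half_tsum]
      exact tsum_congr fun i => by rw [← hPQ n i]
    rw [heq, hqtdef]
    refine tendsto_tsum_of_dominated_convergence (hsummable_bound j) (fun i => ?_) ?_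
    · exact ((hconvd i).mul_const _).mul_const _
    · refine Filter.Eventually.of_forall fun n i => ?_
      have h1 : 0 ≤ Pn n i * (i.choose j : ℝ) * (2⁻¹:ℝ) ^ i := by
        have := hPnn n i; positivity
      rw [Real.norm_eq_abs, abs_of_nonneg h1]
      calc Pn n i * (i.choose j : ℝ) * (2⁻¹:ℝ) ^ i
          ≤ 1 * (i.choose j : ℝ) * (2⁻¹:ℝ) ^ i := by
            refine mul_le_mul_of_nonneg_right (mul_le_mul_of_nonneg_right (hPle1 n i)
              (by positivity)) (by positivity)
        _ = (i.choose j : ℝ) * (2⁻¹:ℝ) ^ i := by ring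
  -- positivity of qt 0
  have hqsummable : Summable q := by
    by_contra h
    rw [tsum_eq_zero_of_not_summable h] at hq
    norm_num at hq
  have hqt0pos : 0 < qt 0 := by
    obtain ⟨i0, hi0⟩ : ∃ i0, 0 < q i0 := by
      by_contra h
      push_neg at h
      have : ∀ i, q i = 0 := fun i => le_antisymm (h i) (hq0 i)
      rw [tsum_congr (fun i => this i), tsum_zero] at hq
      norm_num at hq
    rw [hqtdef]
    refine Summable.tsum_pos ?_ (fun i => by have := hq0 i; positivity) i0 ?_
    · refine Summable.of_nonneg_of_le (fun i => by have := hq0 i; positivity) (fun i => ?_)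
        (hsummable_bound 0)
      have h1 := hq1 i
      calc q i * (i.choose 0 : ℝ) * (2⁻¹:ℝ) ^ i
          = q i * ((i.choose 0 : ℝ) * (2⁻¹:ℝ) ^ i) := by ring
        _ ≤ 1 * ((i.choose 0 : ℝ) * (2⁻¹:ℝ) ^ i) :=
            mul_le_mul_of_nonneg_right h1 (by positivity)
        _ = (i.choose 0 : ℝ) * (2⁻¹:ℝ) ^ i := by ring
    · have : (0:ℝ) < (2⁻¹:ℝ) ^ i0 := by positivity
      simp [Nat.choose_zero_right]
      positivity
  -- coefficients in terms of elementary symmetric functions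
  set Cn : ℕ → ℝ := fun n => ∏ k ∈ Finset.range (K n), (1 - p n k / 2) with hCndef
  have hCnpos : ∀ n, 0 < Cn n := by
    intro n
    rw [hCndef]
    refine Finset.prod_pos fun k _ => by linarith [hp1 n k, hp0 n k]
  have hcoeffE : ∀ n j, (Qt n).coeff j = Esym (K n) (x n) j * Cn n := by
    intro n j
    rw [hQt n, coeff_prod_linear, Esym, Finset.sum_mul]
    refine Finset.sum_congr rfl fun t ht => ?_
    have hts : t ⊆ Finset.range (K n) := (Finset.mem_powersetCard.mp ht).1
    have hsd : (∏ k ∈ Finset.range (K n) \ t, (1 - p n k / 2)) * ∏ k ∈ t, (1 - p n k / 2)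
        = Cn n := by rw [hCndef]; exact Finset.prod_sdiff hts
    rw [← hsd]
    have hxprod : (∏ k ∈ t, x n k) * (∏ k ∈ t, (1 - p n k / 2)) = ∏ k ∈ t, (p n k / 2) := by
      rw [← Finset.prod_mul_distrib]
      refine Finset.prod_congr rfl fun k _ => ?_
      rw [hxdef]
      have h1 : (2 - p n k) ≠ 0 := ne_of_gt (h2p' n k)
      field_simp
    calc (∏ k ∈ t, (p n k / 2)) * ∏ k ∈ Finset.range (K n) \ t, (1 - p n k / 2)
        = ((∏ k ∈ t, x n k) * ∏ k ∈ t, (1 - p n k / 2))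
            * ∏ k ∈ Finset.range (K n) \ t, (1 - p n k / 2) := by rw [hxprod]
      _ = (∏ k ∈ t, x n k)
            * ((∏ k ∈ Finset.range (K n) \ t, (1 - p n k / 2)) * ∏ k ∈ t, (1 - p n k / 2)) := by
          ring
  have hcoeff0 : ∀ n, (Qt n).coeff 0 = Cn n := by
    intro n
    rw [hcoeffE n 0, Esym]
    simp
  -- convergence of elementary symmetric functions
  have hEconv : ∀ j, Tendsto (fun n => Esym (K n) (x n) j) atTop (nhds (qt j / qt 0)) := by
    intro j
    have heq : (fun n => Esym (K n) (x n) j) = fun n => (Qt n).coeff j / (Qt n).coeff 0 := by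
      funext n
      rw [hcoeffE n j, hcoeff0 n, mul_div_assoc, div_self (ne_of_gt (hCnpos n)), mul_one]
    rw [heq]
    exact (hqtconv j).div (hqtconv 0) (ne_of_gt hqt0pos)
  -- convergence of power sums
  have hPsum : ∀ m, 0 < m →
      ∃ Λ, Tendsto (fun n => ∑ k ∈ Finset.range (K n), x n k ^ m) atTop (nhds Λ) := by
    intro m
    induction m using Nat.strong_induction_on with
    | _ m IH =>
      intro hm
      have heq : ∀ n, ∑ k ∈ Finset.range (K n), x n k ^ m
          = (-1 : ℝ) ^ (m + 1) * m * Esym (K n) (x n) m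
            - ∑ a ∈ (Finset.HasAntidiagonal.antidiagonal m).filter (fun a => a.1 ∈ Set.Ioo 0 m),
                (-1 : ℝ) ^ a.1 * Esym (K n) (x n) a.1 * ∑ k ∈ Finset.range (K n), x n k ^ a.2 :=
        fun n => newton_eval (K n) (x n) m hm
      have hfs : ∀ a ∈ (Finset.HasAntidiagonal.antidiagonal m).filter (fun a => a.1 ∈ Set.Ioo 0 m),
          ∃ L, Tendsto (fun n => (-1 : ℝ) ^ a.1 * Esym (K n) (x n) a.1
            * ∑ k ∈ Finset.range (K n), x n k ^ a.2) atTop (nhds L) := by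
        intro a ha
        rw [Finset.mem_filter, Finset.HasAntidiagonal.mem_antidiagonal] at ha
        obtain ⟨hsum, hIoo⟩ := ha
        rw [Set.mem_Ioo] at hIoo
        obtain ⟨h1a, h2a⟩ := hIoo
        have h2pos : 0 < a.2 := by omega
        have h2lt : a.2 < m := by omega
        obtain ⟨L2, hL2⟩ := IH a.2 h2lt h2pos
        exact ⟨_, ((hEconv a.1).const_mul _).mul hL2⟩
      obtain ⟨LS, hLS⟩ := exists_tendsto_finset_sum
        ((Finset.HasAntidiagonal.antidiagonal m).filter (fun a => a.1 ∈ Set.Ioo 0 m))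
        (fun a n => (-1 : ℝ) ^ a.1 * Esym (K n) (x n) a.1
          * ∑ k ∈ Finset.range (K n), x n k ^ a.2) hfs
      refine ⟨(-1 : ℝ) ^ (m + 1) * m * (qt m / qt 0) - LS, ?_⟩
      have h1 : Tendsto (fun n => (-1 : ℝ) ^ (m + 1) * m * Esym (K n) (x n) m) atTop
          (nhds ((-1 : ℝ) ^ (m + 1) * m * (qt m / qt 0))) := (hEconv m).const_mul _
      have := h1.sub hLS
      refine Tendsto.congr (fun n => (heq n).symm) this
  
  -- convergence of each coordinate of x
  have hxconv : ∀ k : ℕ, ∃ L : ℝ, Tendsto (fun n => x n k) atTop (nhds L) := by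
    intro k
    induction k using Nat.strong_induction_on with
    | _ k IH =>
    have hsum_k : ∀ m : ℕ, ∃ Sm,
        Tendsto (fun n => ∑ i ∈ Finset.range k, x n i ^ m) atTop (nhds Sm) := by
      intro m
      refine exists_tendsto_finset_sum (Finset.range k) (fun i n => x n i ^ m) ?_
      intro i hi
      obtain ⟨L, hL⟩ := IH i (Finset.mem_range.mp hi)
      exact ⟨L ^ m, hL.pow m⟩
    set T : ℕ → ℕ → ℝ :=
      fun m n => ∑ i ∈ Finset.range (max (K n) k) \ Finset.range k, x n i ^ m with hTdef
    have hTrange : ∀ m n, 0 < m → (∑ i ∈ Finset.range (K n), x n i ^ m)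
        = ∑ i ∈ Finset.range (max (K n) k), x n i ^ m := by
      intro m n hm
      refine Finset.sum_subset (Finset.range_subset_range.mpr (le_max_left _ _)) ?_
      intro i _ hni
      have hKi : K n ≤ i := le_of_not_gt (fun h => hni (Finset.mem_range.mpr h))
      rw [hxzero n i hKi, zero_pow hm.ne']
    have hTeq : ∀ m n, 0 < m → T m n
        = (∑ i ∈ Finset.range (K n), x n i ^ m) - ∑ i ∈ Finset.range k, x n i ^ m := by
      intro m n hm
      rw [hTrange m n hm, hTdef]
      simp only
      rw [Finset.sum_sdiff_eq_sub (Finset.range_subset_range.mpr (le_max_right _ _))]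
    have hTconv : ∀ m, ∃ Λm, (0 < m → Tendsto (T m) atTop (nhds Λm)) := by
      intro m
      by_cases hm : 0 < m
      · obtain ⟨Λm, hΛm⟩ := hPsum m hm
        obtain ⟨Sm, hSm⟩ := hsum_k m
        refine ⟨Λm - Sm, fun _ => ?_⟩
        exact Tendsto.congr (fun n => (hTeq m n hm).symm) (hΛm.sub hSm)
      · exact ⟨0, fun h => absurd h hm⟩
    choose Λ hΛ using hTconv
    have hT_lb : ∀ m n, 0 < m → x n k ^ m ≤ T m n := by
      intro m n hm
      by_cases hk : k < K n
      · have hmem : k ∈ Finset.range (max (K n) k) \ Finset.range k := by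
          rw [Finset.mem_sdiff, Finset.mem_range, Finset.mem_range]
          exact ⟨lt_max_iff.mpr (Or.inl hk), lt_irrefl k⟩
        exact Finset.single_le_sum (fun i _ => pow_nonneg (hx0 n i) m) hmem
      · have hxk : x n k = 0 := hxzero n k (le_of_not_gt hk)
        rw [hxk, zero_pow hm.ne']
        exact Finset.sum_nonneg fun i _ => pow_nonneg (hx0 n i) m
    have hT_ub : ∀ m n, 0 < m → T m n ≤ x n k ^ (m - 1) * T 1 n := by
      intro m n hm
      rw [hTdef]
      simp only
      rw [Finset.mul_sum]
      refine Finset.sum_le_sum fun i hi => ?_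
      have hki : k ≤ i := by
        rw [Finset.mem_sdiff, Finset.mem_range, Finset.mem_range] at hi
        omega
      have hxi : x n i ≤ x n k := hxanti n k i hki
      have h1 : x n i ^ m = x n i ^ (m - 1) * x n i := by
        conv_lhs => rw [show m = (m - 1) + 1 by omega]
        rw [pow_succ]
      rw [h1, pow_one]
      exact mul_le_mul (pow_le_pow_left₀ (hx0 n i) hxi (m - 1)) le_rfl (hx0 n i)
        (pow_nonneg (hx0 n k) (m - 1))
    have hkey : ∀ (u v : ℝ) (φu φv : ℕ → ℕ),
        Tendsto φu atTop atTop → Tendsto φv atTop atTop →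
        Tendsto (fun j => x (φu j) k) atTop (nhds u) →
        Tendsto (fun j => x (φv j) k) atTop (nhds v) → u ≤ v := by
      intro u v φu φv hφu hφv hu hv
      have hu0 : 0 ≤ u := ge_of_tendsto hu (Filter.Eventually.of_forall fun j => hx0 _ k)
      have hv0 : 0 ≤ v := ge_of_tendsto hv (Filter.Eventually.of_forall fun j => hx0 _ k)
      have hub : ∀ m, 0 < m → u ^ m ≤ Λ m := by
        intro m hm
        exact le_of_tendsto_of_tendsto' (hu.pow m) ((hΛ m hm).comp hφu)
          fun j => hT_lb m (φu j) hm
      have hlb : ∀ m, 0 < m → Λ m ≤ v ^ (m - 1) * Λ 1 := by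
        intro m hm
        exact le_of_tendsto_of_tendsto' ((hΛ m hm).comp hφv)
          ((hv.pow (m - 1)).mul ((hΛ 1 one_pos).comp hφv))
          fun j => hT_ub m (φv j) hm
      by_contra hvu
      push_neg at hvu
      have hu0' : 0 < u := lt_of_le_of_lt hv0 hvu
      by_cases hv0' : v = 0
      · have h2 := le_trans (hub 2 (by norm_num)) (hlb 2 (by norm_num))
        rw [hv0'] at h2
        simp at h2
        nlinarith
      · have hvpos : 0 < v := lt_of_le_of_ne hv0 (Ne.symm hv0')
        have hvne : v ≠ 0 := hvpos.ne'
        have hratio : 1 < u / v := (one_lt_div hvpos).mpr hvu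
        obtain ⟨N, hN⟩ := pow_unbounded_of_one_lt (Λ 1 / u) hratio
        have hineq := le_trans (hub (N + 1) (Nat.succ_pos N)) (hlb (N + 1) (Nat.succ_pos N))
        simp only [Nat.add_sub_cancel] at hineq
        have h1 : Λ 1 < u * (u / v) ^ N := by
          rw [← div_lt_iff₀' hu0']
          exact hN
        have h2 : v ^ N * Λ 1 < v ^ N * (u * (u / v) ^ N) :=
          mul_lt_mul_of_pos_left h1 (pow_pos hvpos N)
        have h3 : v ^ N * (u * (u / v) ^ N) = u ^ (N + 1) := by
          rw [div_pow]
          field_simp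
          ring
        rw [h3] at h2
        linarith
    have hmem : ∀ n, x n k ∈ Set.Icc (0:ℝ) 1 := fun n => ⟨hx0 n k, hx1 n k⟩
    obtain ⟨L, _, φ, hφmono, hφlim⟩ :=
      tendsto_subseq_of_bounded (Metric.isBounded_Icc (0:ℝ) 1) hmem
    refine ⟨L, tendsto_of_subseq_tendsto fun ns hns => ?_⟩
    obtain ⟨v, _, ψ, hψmono, hψlim⟩ :=
      tendsto_subseq_of_bounded (Metric.isBounded_Icc (0:ℝ) 1) (fun j => hmem (ns j))
    have hvL : v = L := by
      have h1 : v ≤ L := hkey v L (ns ∘ ψ) φ (hns.comp hψmono.tendsto_atTop)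
        hφmono.tendsto_atTop hψlim hφlim
      have h2 : L ≤ v := hkey L v φ (ns ∘ ψ) hφmono.tendsto_atTop
        (hns.comp hψmono.tendsto_atTop) hφlim hψlim
      linarith
    refine ⟨ψ, ?_⟩
    rw [← hvL]
    exact hψlim
  intro k
  obtain ⟨L, hL⟩ := hxconv k
  have hL0 : 0 ≤ L := ge_of_tendsto hL (Filter.Eventually.of_forall fun n => hx0 n k)
  refine ⟨2 * L / (1 + L), ?_⟩
  have hfun : (fun n => p n k) = fun n => 2 * x n k / (1 + x n k) := funext fun n => hpx n k
  rw [hfun]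
  exact (hL.const_mul 2).div (hL.const_add 1) (by linarith : (1:ℝ) + L ≠ 0)
end
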